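/- Let k be an algebraically closed field of characteristic 2 and let f = w*z^2 + x^3 + y^2*z + x*y*z ∈ k[x,y,z,w]. Then f ∉ (x^2, y^2, z^2, w^2); consequently, by Fedder's criterion, the cubic surface {w z^2 + x^3 + y^2 z + x y z = 0} in P^3 (the del Pezzo surface of degree 3 with singularity type E_6^1 in characteristic 2) is Frobenius split. -/

import Mathlib

open MvPolynomial

/-- A ring `R` of characteristic `p` is Frobenius split if the Frobenius `R → R, r ↦ rᵖ`
admits a splitting, i.e. an additive map `σ : R → R` with `σ 1 = 1` and
`σ (aᵖ · b) = a · σ b`.  For the homogeneous coordinate ring of a Du Val del Pezzo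
surface this is equivalent to (global) Frobenius splitting of the surface. -/
def IsFrobeniusSplitRing (p : ℕ) (R : Type*) [CommRing R] : Prop :=
  ∃ σ : R →+ R, σ 1 = 1 ∧ ∀ a b : R, σ (a ^ p * b) = a * σ b

section Aux

variable {k : Type*} [Field k] [IsAlgClosed k] [CharP k 2]

local instance : Fact (Nat.Prime 2) := ⟨Nat.prime_two⟩
local instance : ExpChar k 2 := ExpChar.prime Nat.prime_two

/-- square root in a perfect field of char 2 -/
noncomputable def rt (k : Type*) [Field k] [IsAlgClosed k] [CharP k 2] : k →+* k :=
  ((frobeniusEquiv k 2).symm : k ≃+* k)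

lemma rt_sq (c : k) : rt k (c ^ 2) = c := by
  have : c ^ 2 = frobenius k 2 c := rfl
  rw [this]
  exact frobeniusEquiv_symm_apply_frobenius k 2 c

/-- half of an exponent vector -/
noncomputable def hf (m : Fin 4 →₀ ℕ) : Fin 4 →₀ ℕ := m.mapRange (· / 2) (by simp)

lemma hf_apply (m : Fin 4 →₀ ℕ) (i : Fin 4) : hf m i = m i / 2 := rfl

/-- the p⁻¹-linear projection onto the all-odd part -/
noncomputable def tau (k : Type*) [Field k] [IsAlgClosed k] [CharP k 2] :
    MvPolynomial (Fin 4) k →+ MvPolynomial (Fin 4) k :=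
  (Finsupp.liftAddHom fun m =>
    if ∀ i, m i % 2 = 1 then
      ((monomial (hf m)).toAddMonoidHom.comp (rt k).toAddMonoidHom) else 0).comp
    AddMonoidAlgebra.coeffAddEquiv.toAddMonoidHom

lemma tau_monomial (m : Fin 4 →₀ ℕ) (c : k) :
    tau k (monomial m c) =
      if ∀ i, m i % 2 = 1 then monomial (hf m) (rt k c) else 0 := by
  rw [← single_eq_monomial]
  show Finsupp.liftAddHom (N := MvPolynomial (Fin 4) k) _ (Finsupp.single m c) = _
  rw [Finsupp.liftAddHom_apply_single]
  split_ifs <;> rfl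

end Aux

section Aux2
variable {k : Type*} [Field k] [IsAlgClosed k] [CharP k 2]

local instance : Fact (Nat.Prime 2) := ⟨Nat.prime_two⟩

lemma tau_monomial_sq_mul (m n : Fin 4 →₀ ℕ) (c d : k) :
    tau k ((monomial m c) ^ 2 * monomial n d) = monomial m c * tau k (monomial n d) := by
  rw [monomial_pow, monomial_mul, tau_monomial, tau_monomial]
  have hcond : (∀ i, (2 • m + n) i % 2 = 1) ↔ (∀ i, n i % 2 = 1) := by
    apply forall_congr'
    intro i
    simp only [Finsupp.add_apply, Finsupp.smul_apply, smul_eq_mul]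
    omega
  have hhalf : hf (2 • m + n) = m + hf n := by
    ext i
    simp only [hf_apply, Finsupp.add_apply, Finsupp.smul_apply, smul_eq_mul]
    omega
  have hrt : rt k (c ^ 2 * d) = c * rt k d := by
    rw [map_mul, rt_sq]
  split_ifs with h1 h2 h2
  · rw [hhalf, hrt, monomial_mul]
  · exact absurd (hcond.mp h1) h2
  · exact absurd (hcond.mpr h2) h1
  · rw [mul_zero]

lemma tau_sq_mul (a b : MvPolynomial (Fin 4) k) :
    tau k (a ^ 2 * b) = a * tau k b := by
  haveI : CharP (MvPolynomial (Fin 4) k) 2 := inferInstance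
  induction a using MvPolynomial.induction_on' with
  | add p q hp hq =>
    rw [add_pow_char, add_mul, map_add, hp, hq, add_mul]
  | monomial m c =>
    induction b using MvPolynomial.induction_on' with
    | add p q hp hq =>
      rw [mul_add, map_add, hp, hq, map_add, mul_add]
    | monomial n d => exact tau_monomial_sq_mul m n c d

end Aux2

section Aux3
variable {k : Type*} [Field k] [IsAlgClosed k] [CharP k 2]

local notation "S" => MvPolynomial (Fin 4) k

lemma X_mul_X_eq (a b : Fin 4) :
    (X a * X b : S) = monomial (Finsupp.single a 1 + Finsupp.single b 1) 1 := by
  rw [X, X, monomial_mul, one_mul]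

lemma tau_one : tau k (1 : S) = 0 := by
  have : (1 : S) = monomial 0 1 := by simp
  rw [this, tau_monomial, if_neg]
  push_neg
  exact ⟨0, by simp⟩

lemma tau_X03 : tau k (X 0 * X 3 : S) = 0 := by
  rw [X_mul_X_eq, tau_monomial, if_neg]
  push_neg
  refine ⟨1, ?_⟩
  simp [Finsupp.single_apply]

lemma tau_X23 : tau k (X 2 * X 3 : S) = 0 := by
  rw [X_mul_X_eq, tau_monomial, if_neg]
  push_neg
  refine ⟨0, ?_⟩
  simp [Finsupp.single_apply]

lemma tau_X0123 : tau k (X 0 * X 1 * X 2 * X 3 : S) = 1 := by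
  have e : (X 0 * X 1 * X 2 * X 3 : S) =
      monomial (Finsupp.single 0 1 + Finsupp.single 1 1 + Finsupp.single 2 1 +
        Finsupp.single 3 1) 1 := by
    rw [X, X, X, X, monomial_mul, monomial_mul, monomial_mul]
    norm_num
  rw [e, tau_monomial, if_pos]
  · have hh : hf (Finsupp.single 0 1 + Finsupp.single 1 1 + Finsupp.single 2 1 +
        Finsupp.single (3 : Fin 4) 1) = 0 := by
      ext i
      rw [hf_apply]
      fin_cases i <;> simp [Finsupp.single_apply]
    rw [hh, map_one]
    simp
  · intro i
    fin_cases i <;> simp [Finsupp.single_apply]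

lemma tau_fw :
    tau k ((X 3 * X 2 ^ 2 + X 0 ^ 3 + X 1 ^ 2 * X 2 + X 0 * X 1 * X 2 : S) * X 3) = 1 := by
  have e : ((X 3 * X 2 ^ 2 + X 0 ^ 3 + X 1 ^ 2 * X 2 + X 0 * X 1 * X 2 : S) * X 3) =
      (X 3 * X 2) ^ 2 * 1 + ((X 0) ^ 2 * (X 0 * X 3) + ((X 1) ^ 2 * (X 2 * X 3) +
        X 0 * X 1 * X 2 * X 3)) := by ring
  rw [e, map_add, map_add, map_add, tau_sq_mul, tau_sq_mul, tau_sq_mul,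
    tau_one, tau_X03, tau_X23, tau_X0123]
  ring

end Aux3

section Main
variable (k : Type*) [Field k] [IsAlgClosed k] [CharP k 2]

noncomputable def fpoly : MvPolynomial (Fin 4) k :=
  X 3 * X 2 ^ 2 + X 0 ^ 3 + X 1 ^ 2 * X 2 + X 0 * X 1 * X 2

noncomputable def Ipoly : Ideal (MvPolynomial (Fin 4) k) :=
  Ideal.span {fpoly k}

-- the candidate splitting on polynomials, descended to the quotient
noncomputable def sigma0 :
    (MvPolynomial (Fin 4) k ⧸ Ipoly k) → MvPolynomial (Fin 4) k ⧸ Ipoly k := fun r =>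
  Quotient.liftOn r (fun g => Ideal.Quotient.mk (Ipoly k) (tau k (fpoly k * X 3 * g)))
    (by
      intro a b hab
      have hmem : a - b ∈ Ipoly k := (Submodule.quotientRel_def _).mp hab
      obtain ⟨s, hs⟩ := Ideal.mem_span_singleton'.mp hmem
      rw [Ideal.Quotient.eq, ← map_sub, ← mul_sub, ← hs]
      have e : fpoly k * X 3 * (s * fpoly k) = (fpoly k) ^ 2 * (X 3 * s) := by ring
      rw [e, tau_sq_mul]
      exact Ideal.mul_mem_right _ _ (Ideal.subset_span rfl))

lemma sigma0_mk (g : MvPolynomial (Fin 4) k) :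
    sigma0 k (Ideal.Quotient.mk (Ipoly k) g) =
      Ideal.Quotient.mk (Ipoly k) (tau k (fpoly k * X 3 * g)) := rfl

set_option synthInstance.maxHeartbeats 1000000 in
noncomputable def sigma :
    (MvPolynomial (Fin 4) k ⧸ Ipoly k) →+ (MvPolynomial (Fin 4) k ⧸ Ipoly k) where
  toFun := sigma0 k
  map_zero' := by
    have h0 : (0 : MvPolynomial (Fin 4) k ⧸ Ipoly k) = Ideal.Quotient.mk (Ipoly k) 0 := by
      simp
    rw [h0, sigma0_mk]
    simp
  map_add' := by
    intro r s
    obtain ⟨a, rfl⟩ := Ideal.Quotient.mk_surjective (I := Ipoly k) r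
    obtain ⟨b, rfl⟩ := Ideal.Quotient.mk_surjective (I := Ipoly k) s
    show sigma0 k (Ideal.Quotient.mk (Ipoly k) a + Ideal.Quotient.mk (Ipoly k) b) =
      sigma0 k (Ideal.Quotient.mk (Ipoly k) a) + sigma0 k (Ideal.Quotient.mk (Ipoly k) b)
    rw [← (Ideal.Quotient.mk (Ipoly k)).map_add, sigma0_mk, sigma0_mk, sigma0_mk, mul_add, map_add, map_add]

lemma sigma_apply (r : MvPolynomial (Fin 4) k ⧸ Ipoly k) : sigma k r = sigma0 k r := rfl

lemma sigma_one : sigma k 1 = 1 := by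
  have h1 : (1 : MvPolynomial (Fin 4) k ⧸ Ipoly k) = Ideal.Quotient.mk (Ipoly k) 1 := rfl
  rw [h1, sigma_apply, sigma0_mk, mul_one, fpoly, tau_fw, map_one]

lemma sigma_sq_mul (a b : MvPolynomial (Fin 4) k ⧸ Ipoly k) :
    sigma k (a ^ 2 * b) = a * sigma k b := by
  obtain ⟨A, rfl⟩ := Ideal.Quotient.mk_surjective (I := Ipoly k) a
  obtain ⟨B, rfl⟩ := Ideal.Quotient.mk_surjective (I := Ipoly k) b
  have e1 : (Ideal.Quotient.mk (Ipoly k) A) ^ 2 * Ideal.Quotient.mk (Ipoly k) B =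
      Ideal.Quotient.mk (Ipoly k) (A ^ 2 * B) := by rw [map_mul, map_pow]
  rw [e1, sigma_apply, sigma_apply, sigma0_mk, sigma0_mk]
  have e2 : fpoly k * X 3 * (A ^ 2 * B) = A ^ 2 * (fpoly k * X 3 * B) := by ring
  rw [e2, tau_sq_mul, map_mul]

end Main

section Part1
variable {k : Type*} [Field k] [IsAlgClosed k] [CharP k 2]

noncomputable def m0 : Fin 4 →₀ ℕ :=
  Finsupp.single 0 1 + Finsupp.single 1 1 + Finsupp.single 2 1

lemma m0_apply (i : Fin 4) : m0 i = if i = 3 then 0 else 1 := by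
  fin_cases i <;> simp [m0, Finsupp.single_apply]

lemma coeff_sq_zero (i : Fin 4) (q : MvPolynomial (Fin 4) k) :
    coeff m0 (q * X i ^ 2) = 0 := by
  have e : q * X i ^ 2 = q * X i * X i := by ring
  rw [e, coeff_mul_X']
  split_ifs with h
  · rw [coeff_mul_X']
    split_ifs with h2
    · exfalso
      rw [Finsupp.mem_support_iff] at h h2
      rw [Finsupp.tsub_apply, Finsupp.single_apply, if_pos rfl, m0_apply] at h2
      rw [m0_apply] at h
      split_ifs at h h2 <;> omega
    · rfl
  · rfl

lemma coeff_m0_f :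
    coeff m0 (X 3 * X 2 ^ 2 + X 0 ^ 3 + X 1 ^ 2 * X 2 + X 0 * X 1 * X 2 :
      MvPolynomial (Fin 4) k) = 1 := by
  have e1 : (X 3 * X 2 ^ 2 : MvPolynomial (Fin 4) k) =
      monomial (Finsupp.single 3 1 + Finsupp.single 2 2) 1 := by
    rw [X, X_pow_eq_monomial, monomial_mul, one_mul]
  have e2 : (X 0 ^ 3 : MvPolynomial (Fin 4) k) = monomial (Finsupp.single 0 3) 1 :=
    X_pow_eq_monomial
  have e3 : (X 1 ^ 2 * X 2 : MvPolynomial (Fin 4) k) =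
      monomial (Finsupp.single 1 2 + Finsupp.single 2 1) 1 := by
    rw [X_pow_eq_monomial, X, monomial_mul, one_mul]
  have e4 : (X 0 * X 1 * X 2 : MvPolynomial (Fin 4) k) = monomial m0 1 := by
    rw [X, X, X, monomial_mul, monomial_mul, one_mul, one_mul, m0]
  rw [e1, e2, e3, e4, coeff_add, coeff_add, coeff_add, coeff_monomial, coeff_monomial,
    coeff_monomial, coeff_monomial, if_pos rfl]
  rw [if_neg, if_neg, if_neg]
  · ring
  · intro h
    have := DFunLike.congr_fun h 1
    simp [m0_apply, Finsupp.single_apply] at this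
  · intro h
    have := DFunLike.congr_fun h 0
    simp [m0_apply, Finsupp.single_apply] at this
  · intro h
    have := DFunLike.congr_fun h 3
    simp [m0_apply, Finsupp.single_apply] at this

lemma part1 :
    (X 3 * X 2 ^ 2 + X 0 ^ 3 + X 1 ^ 2 * X 2 + X 0 * X 1 * X 2 : MvPolynomial (Fin 4) k) ∉
      Ideal.span {(X 0 : MvPolynomial (Fin 4) k) ^ 2, X 1 ^ 2, X 2 ^ 2, X 3 ^ 2} := by
  intro h
  rw [show ({(X 0 : MvPolynomial (Fin 4) k) ^ 2, X 1 ^ 2, X 2 ^ 2, X 3 ^ 2} :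
      Set (MvPolynomial (Fin 4) k)) =
      insert ((X 0 : MvPolynomial (Fin 4) k) ^ 2) {X 1 ^ 2, X 2 ^ 2, X 3 ^ 2} from rfl,
    Ideal.mem_span_insert] at h
  obtain ⟨a0, z0, hz0, he0⟩ := h
  rw [show ({(X 1 : MvPolynomial (Fin 4) k) ^ 2, X 2 ^ 2, X 3 ^ 2} :
      Set (MvPolynomial (Fin 4) k)) =
      insert ((X 1 : MvPolynomial (Fin 4) k) ^ 2) {X 2 ^ 2, X 3 ^ 2} from rfl,
    Ideal.mem_span_insert] at hz0
  obtain ⟨a1, z1, hz1, he1⟩ := hz0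
  rw [show ({(X 2 : MvPolynomial (Fin 4) k) ^ 2, X 3 ^ 2} :
      Set (MvPolynomial (Fin 4) k)) =
      insert ((X 2 : MvPolynomial (Fin 4) k) ^ 2) {X 3 ^ 2} from rfl,
    Ideal.mem_span_insert] at hz1
  obtain ⟨a2, z2, hz2, he2⟩ := hz1
  rw [Ideal.mem_span_singleton'] at hz2
  obtain ⟨a3, he3⟩ := hz2
  have hc := congrArg (coeff m0) he0
  rw [he1, he2, ← he3, coeff_m0_f, coeff_add, coeff_add, coeff_add,
    coeff_sq_zero, coeff_sq_zero, coeff_sq_zero, coeff_sq_zero] at hc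
  simp at hc

end Part1

/-- Let `k` be algebraically closed of characteristic 2 and
`f = w·z² + x³ + y²·z + x·y·z ∈ k[x,y,z,w]`.  Then `f ∉ (x², y², z², w²)`; consequently,
by Fedder's criterion, the cubic surface `{w·z² + x³ + y²·z + x·y·z = 0} ⊆ ℙ³` (the del
Pezzo surface of degree 3 of type `E₆¹` in characteristic 2) is Frobenius split. -/
theorem fedder_E6_1_char2 (k : Type*) [Field k] [IsAlgClosed k] [CharP k 2] :
    (X 3 * X 2 ^ 2 + X 0 ^ 3 + X 1 ^ 2 * X 2 + X 0 * X 1 * X 2 : MvPolynomial (Fin 4) k) ∉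
      Ideal.span {(X 0 : MvPolynomial (Fin 4) k) ^ 2, X 1 ^ 2, X 2 ^ 2, X 3 ^ 2} ∧
    IsFrobeniusSplitRing 2
      (MvPolynomial (Fin 4) k ⧸
        Ideal.span
          {(X 3 * X 2 ^ 2 + X 0 ^ 3 + X 1 ^ 2 * X 2 + X 0 * X 1 * X 2 :
              MvPolynomial (Fin 4) k)}) := by
  exact ⟨part1, ⟨sigma k, sigma_one k, fun a b => sigma_sq_mul k a b⟩⟩
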